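/- (Lemma 3 of the paper, second identity.) For all integers s ≥ 1 and u ≥ s, the remainders modulo G^s satisfy (χ(s,u)·P − χ(s,u+1)) mod G^s = ((Λ·P − Λ·R − Ω·G) · Σ_{i=0}^{s−1} binom(u,i) Λ^{s−1−i} R^{u−i} Ω^i G^i) mod G^s. -/

import Mathlib

open Polynomial

noncomputable def Lam (F : Type*) [CommRing F] (t k : ℕ) :
    Polynomial (MvPolynomial (Fin t ⊕ Fin k) F) :=
  X ^ t + ∑ j : Fin t, C (MvPolynomial.X (Sum.inl j)) * X ^ (j : ℕ)

noncomputable def Pp (F : Type*) [CommRing F] (t k : ℕ) :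
    Polynomial (MvPolynomial (Fin t ⊕ Fin k) F) :=
  ∑ i : Fin k, C (MvPolynomial.X (Sum.inr i)) * X ^ (i : ℕ)

noncomputable def liftP (F : Type*) [CommRing F] (t k : ℕ) (f : Polynomial F) :
    Polynomial (MvPolynomial (Fin t ⊕ Fin k) F) :=
  f.map MvPolynomial.C

/-- `Ω`, the negated quotient in the division of `Λ·R` by the monic polynomial `G`. -/
noncomputable def Om (F : Type*) [Field F] (t k : ℕ) (R G : Polynomial F) :
    Polynomial (MvPolynomial (Fin t ⊕ Fin k) F) :=
  -((Lam F t k * liftP F t k R) /ₘ liftP F t k G)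

/-- `χ(s,u) := Λ^{s−u}·(Λ·R + Ω·G)^u` if `u < s`, and
`χ(s,u) := (Σ_{i=0}^{s−1} binom(u,i) Λ^{s−i} R^{u−i} Ω^i G^i) mod G^s` if `u ≥ s`. -/
noncomputable def chi (F : Type*) [Field F] (t k : ℕ) (R G : Polynomial F) (s u : ℕ) :
    Polynomial (MvPolynomial (Fin t ⊕ Fin k) F) :=
  if u < s then
    Lam F t k ^ (s - u) * (Lam F t k * liftP F t k R + Om F t k R G * liftP F t k G) ^ u
  else
    (∑ i ∈ Finset.range s, u.choose i •
      (Lam F t k ^ (s - i) * liftP F t k R ^ (u - i) * Om F t k R G ^ i * liftP F t k G ^ i))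
      %ₘ liftP F t k G ^ s

lemma my_mod_eq_of_dvd_sub {A : Type*} [CommRing A] {q a b : A[X]} (hq : q.Monic)
    (h : q ∣ a - b) : a %ₘ q = b %ₘ q := by
  have h0 := (Polynomial.modByMonic_eq_zero_iff_dvd hq).2 h
  rw [Polynomial.sub_modByMonic] at h0
  exact sub_eq_zero.1 h0
lemma my_key {A : Type*} [CommRing A] (L R O Gp P : A[X]) (u m : ℕ) (hu : m + 1 ≤ u) :
    (∑ i ∈ Finset.range (m+1), u.choose i • (L^(m+1-i) * R^(u-i) * O^i * Gp^i)) * P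
      - ∑ i ∈ Finset.range (m+1), (u+1).choose i • (L^(m+1-i) * R^(u+1-i) * O^i * Gp^i)
    = (L*P - L*R - O*Gp) * (∑ i ∈ Finset.range (m+1), u.choose i • (L^(m-i) * R^(u-i) * O^i * Gp^i))
      + u.choose m • (R^(u-m) * O^(m+1) * Gp^(m+1)) := by
  set g : ℕ → A[X] := fun j => L^(m+1-j) * R^(u+1-j) * O^j * Gp^j with hg
  have hLP : (∑ i ∈ Finset.range (m+1), u.choose i • (L^(m+1-i) * R^(u-i) * O^i * Gp^i)) * P
      = L * P * (∑ i ∈ Finset.range (m+1), u.choose i • (L^(m-i) * R^(u-i) * O^i * Gp^i)) := by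
    rw [Finset.sum_mul, Finset.mul_sum]
    refine Finset.sum_congr rfl fun i hi => ?_
    have h1 : m + 1 - i = (m - i) + 1 := by
      have := Finset.mem_range.1 hi; omega
    rw [h1, pow_succ]; ring
  have hLR : L * R * (∑ i ∈ Finset.range (m+1), u.choose i • (L^(m-i) * R^(u-i) * O^i * Gp^i))
      = ∑ i ∈ Finset.range (m+1), u.choose i • g i := by
    rw [Finset.mul_sum]
    refine Finset.sum_congr rfl fun i hi => ?_
    have hi' := Finset.mem_range.1 hi
    have h1 : m + 1 - i = (m - i) + 1 := by omega
    have h2 : u + 1 - i = (u - i) + 1 := by omega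
    rw [hg]; dsimp only; rw [h1, h2, pow_succ, pow_succ]; ring
  have hOG : O * Gp * (∑ i ∈ Finset.range (m+1), u.choose i • (L^(m-i) * R^(u-i) * O^i * Gp^i))
      = ∑ i ∈ Finset.range (m+1), u.choose i • g (i+1) := by
    rw [Finset.mul_sum]
    refine Finset.sum_congr rfl fun i hi => ?_
    have hi' := Finset.mem_range.1 hi
    have h1 : m + 1 - (i+1) = m - i := by omega
    have h2 : u + 1 - (i+1) = u - i := by omega
    rw [hg]; dsimp only; rw [h1, h2, pow_succ, pow_succ]; ring
  have hshift : (∑ i ∈ Finset.range (m+1), u.choose i • g i) + (∑ i ∈ Finset.range (m+1), u.choose i • g (i+1))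
      = (∑ i ∈ Finset.range (m+1), (u+1).choose i • g i) + u.choose m • g (m+1) := by
    rw [Finset.sum_range_succ (fun i => u.choose i • g (i+1)) m,
        Finset.sum_range_succ' (fun i => u.choose i • g i) m,
        Finset.sum_range_succ' (fun i => (u+1).choose i • g i) m,
    ]
    simp only [Nat.choose_zero_right, Nat.choose_succ_succ, add_smul,
      Finset.sum_add_distrib]
    abel
  have hgm : g (m+1) = R^(u-m) * O^(m+1) * Gp^(m+1) := by
    rw [hg]; dsimp only
    have h1 : m + 1 - (m+1) = 0 := by omega
    have h2 : u + 1 - (m+1) = u - m := by omega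
    rw [h1, h2, pow_zero, one_mul]
  have hSu1 : (∑ i ∈ Finset.range (m+1), (u+1).choose i • (L^(m+1-i) * R^(u+1-i) * O^i * Gp^i))
      = ∑ i ∈ Finset.range (m+1), (u+1).choose i • g i := rfl
  rw [hgm] at hshift
  rw [hLP, hSu1, sub_mul, sub_mul, hLR, hOG]
  linear_combination hshift


/-- Lemma 3, second identity: for `u ≥ s`,
`(χ(s,u)·P − χ(s,u+1)) mod G^s
  = ((Λ·P − Λ·R − Ω·G) · Σ_{i=0}^{s−1} binom(u,i) Λ^{s−1−i} R^{u−i} Ω^i G^i) mod G^s`. -/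
theorem stmt9 (F : Type*) [Field F] (n t k : ℕ) (hn : 0 < n) (ht : 1 ≤ t) (hk : 1 ≤ k)
    (a b : Fin n → F) (ha : Function.Injective a)
    (G : Polynomial F) (hG : G = ∏ ℓ : Fin n, (X - C (a ℓ)))
    (R : Polynomial F) (hRdeg : R.degree < n) (hR : ∀ ℓ, R.eval (a ℓ) = b ℓ) :
    ∀ s u : ℕ, 1 ≤ s → s ≤ u →
      (chi F t k R G s u * Pp F t k - chi F t k R G s (u + 1)) %ₘ liftP F t k G ^ s =
        ((Lam F t k * Pp F t k - Lam F t k * liftP F t k R -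
            Om F t k R G * liftP F t k G) *
          ∑ i ∈ Finset.range s, u.choose i •
            (Lam F t k ^ (s - 1 - i) * liftP F t k R ^ (u - i) *
              Om F t k R G ^ i * liftP F t k G ^ i)) %ₘ liftP F t k G ^ s := by
  intro s u hs hsu
  obtain ⟨m, rfl⟩ : ∃ m, s = m + 1 := ⟨s - 1, by omega⟩
  set L := Lam F t k
  set O := Om F t k R G
  set Rp := liftP F t k R
  set Gp := liftP F t k G
  set P := Pp F t k
  have hGm : G.Monic := by
    rw [hG]; exact monic_prod_of_monic _ _ fun i _ => monic_X_sub_C _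
  have hGpm : Gp.Monic := hGm.map _
  have hQ : (Gp ^ (m + 1)).Monic := hGpm.pow _
  rw [chi, chi, if_neg (by omega), if_neg (by omega)]
  set Su : Polynomial (MvPolynomial (Fin t ⊕ Fin k) F) :=
    ∑ i ∈ Finset.range (m+1), u.choose i • (L ^ (m+1 - i) * Rp ^ (u - i) * O ^ i * Gp ^ i)
    with hSu
  set Su1 : Polynomial (MvPolynomial (Fin t ⊕ Fin k) F) :=
    ∑ i ∈ Finset.range (m+1), (u+1).choose i • (L ^ (m+1 - i) * Rp ^ (u+1 - i) * O ^ i * Gp ^ i)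
    with hSu1
  apply my_mod_eq_of_dvd_sub hQ
  refine ⟨u.choose m • (Rp ^ (u - m) * O ^ (m+1)) + Su1 /ₘ (Gp ^ (m+1))
    - (Su /ₘ (Gp ^ (m+1))) * P, ?_⟩
  rw [Polynomial.modByMonic_eq_sub_mul_div Su (Gp ^ (m + 1)),
      Polynomial.modByMonic_eq_sub_mul_div Su1 (Gp ^ (m + 1))]
  have hk := my_key L Rp O Gp P u m hsu
  have hidx : ∀ i : ℕ, m + 1 - 1 - i = m - i := fun i => by omega
  simp only [hidx]
  linear_combination hk
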